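/- Let G ⊂ ℂ be a domain with one-point (Alexandroff) compactification G* = G ∪ {∞}, and let F be a relatively closed subset of G. Then G* \ F is connected if and only if every connected component of the open set G \ F is unbounded or has an accumulation point on ∂G. -/

import Mathlib

open Set Bornology OnePoint Topology Filter

/-- `∞` lies in the closure of the image of `A` iff the closure of `A` is not compact. -/
lemma aux_infty_mem_closure {X : Type*} [TopologicalSpace X] [T2Space X] {A : Set X} :
    (∞ : OnePoint X) ∈ closure ((fun x : X => (x : OnePoint X)) '' A) ↔
      ¬ IsCompact (closure A) := by
  rw [mem_closure_iff_nhds_basis OnePoint.hasBasis_nhds_infty]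
  constructor
  · rintro h hc
    obtain ⟨y, hyA, hy⟩ := h (closure A) ⟨hc.isClosed, hc⟩
    obtain ⟨a, haA, rfl⟩ := hyA
    rcases hy with hy | hy
    · obtain ⟨b, hb, hba⟩ := hy
      exact hb (OnePoint.coe_injective hba ▸ subset_closure haA)
    · exact OnePoint.coe_ne_infty a hy
  · rintro h K ⟨hKc, hKcpt⟩
    by_contra hno
    push_neg at hno
    have hAK : A ⊆ K := by
      intro a ha
      by_contra haK
      exact hno _ (mem_image_of_mem _ ha) (Or.inl ⟨a, haK, rfl⟩)
    exact h (hKcpt.of_isClosed_subset isClosed_closure (closure_minimal hAK hKc))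

/-- compactness of `closure C ∩ G` for `C ⊆ G`, `G` open, in a proper space. -/
lemma aux_compact_iff {G C : Set ℂ} (hGo : IsOpen G) (hCG : C ⊆ G) :
    IsCompact (closure C ∩ G) ↔ IsBounded C ∧ closure C ∩ frontier G = ∅ := by
  constructor
  · intro h
    have hcl : closure C ⊆ closure C ∩ G :=
      closure_minimal (subset_inter subset_closure hCG) h.isClosed
    have hclG : closure C ⊆ G := hcl.trans inter_subset_right
    refine ⟨(h.isBounded.subset hcl).subset subset_closure, ?_⟩
    rw [← subset_empty_iff]
    intro x ⟨hx1, hx2⟩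
    exact (hGo.frontier_eq ▸ hx2).2 (hclG hx1)
  · rintro ⟨hb, hf⟩
    have hclG : closure C ⊆ G := by
      intro x hx
      have : x ∈ closure G := closure_mono hCG hx
      by_contra h
      have hxf : x ∈ frontier G := by
        rw [hGo.frontier_eq]; exact ⟨this, h⟩
      exact (eq_empty_iff_forall_notMem.mp hf x) ⟨hx, hxf⟩
    rw [inter_eq_self_of_subset_left hclG]
    exact hb.isCompact_closure

lemma aux_closure_inter {U : Set ℂ} (hU : IsOpen U) (z : ℂ) :
    closure (connectedComponentIn U z) ∩ U = connectedComponentIn U z := by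
  apply Subset.antisymm
  · rintro y ⟨hy1, hy2⟩
    have hyo : IsOpen (connectedComponentIn U y) := hU.connectedComponentIn
    have hmem : y ∈ connectedComponentIn U y := mem_connectedComponentIn hy2
    obtain ⟨w, hw1, hw2⟩ := _root_.mem_closure_iff.mp hy1 _ hyo hmem
    have heq : connectedComponentIn U y = connectedComponentIn U z :=
      (connectedComponentIn_eq hw1).trans (connectedComponentIn_eq hw2).symm
    exact heq ▸ hmem
  · exact subset_inter subset_closure (connectedComponentIn_subset _ _)

lemma aux_key (G : Set ℂ) (hGo : IsOpen G) (C : Set ℂ) (hCG : C ⊆ G) :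
    ((∞ : OnePoint G) ∈
        closure ((fun z : G => (OnePoint.some z : OnePoint G)) '' {z : G | (z : ℂ) ∈ C})) ↔
      (¬ IsBounded C ∨ (closure C ∩ frontier G).Nonempty) := by
  have h0 : (fun z : G => (OnePoint.some z : OnePoint G)) = ((↑) : G → OnePoint G) := rfl
  rw [h0, aux_infty_mem_closure]
  have himg : (Subtype.val '' {z : G | (z : ℂ) ∈ C}) = C := by
    rw [show {z : G | (z : ℂ) ∈ C} = Subtype.val ⁻¹' C from rfl,
      Subtype.image_preimage_coe, inter_eq_right.mpr hCG]
  have h1 : closure {z : G | (z : ℂ) ∈ C} = (Subtype.val : G → ℂ) ⁻¹' closure C := by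
    rw [IsEmbedding.subtypeVal.closure_eq_preimage_closure_image, himg]
  rw [h1, Subtype.isCompact_iff, Subtype.image_preimage_coe,
    inter_comm, aux_compact_iff hGo hCG, nonempty_iff_ne_empty]
  tauto

/-- For a domain `G ⊆ ℂ` with Alexandroff compactification `G* = G ∪ {∞}` and a
relatively closed `F ⊆ G`, the set `G* \ F` is connected iff every connected
component of `G \ F` is unbounded or has an accumulation point on `∂G`. -/
theorem stmt_19 (G : Set ℂ) (hGo : IsOpen G) (hGc : IsConnected G)
    (F : Set ℂ) (hFG : F ⊆ G)
    (hFcl : IsClosed ((fun z : G => (z : ℂ)) ⁻¹' F)) :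
    IsConnected {p : OnePoint G |
        p ∉ (fun z : G => (OnePoint.some z : OnePoint G)) '' {z : G | (z : ℂ) ∈ F}} ↔
      ∀ z ∈ G \ F,
        ¬ IsBounded (connectedComponentIn (G \ F) z) ∨
          (closure (connectedComponentIn (G \ F) z) ∩ frontier G).Nonempty := by
  set ι : G → OnePoint G := fun z : G => (OnePoint.some z : OnePoint G) with hι
  set U : Set ℂ := G \ F with hUdef
  have hUG : U ⊆ G := diff_subset
  have hUo : IsOpen U := by
    have h1 : IsOpen ((fun z : G => (z : ℂ)) ⁻¹' U) := by
      have he : (fun z : G => (z : ℂ)) ⁻¹' U = ((fun z : G => (z : ℂ)) ⁻¹' F)ᶜ := by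
        ext z; simp only [mem_preimage, mem_compl_iff, hUdef, mem_diff]
        exact ⟨fun h => h.2, fun h => ⟨z.2, h⟩⟩
      rw [he]; exact hFcl.isOpen_compl
    have h2 := hGo.isOpenMap_subtype_val _ h1
    rwa [Subtype.image_preimage_coe, inter_eq_right.mpr hUG] at h2
  have hinj : Function.Injective ι := OnePoint.coe_injective
  set S : Set (OnePoint G) := {p : OnePoint G | p ∉ ι '' {z : G | (z : ℂ) ∈ F}} with hS
  have hSeq : S = insert ∞ (ι '' {z : G | (z : ℂ) ∈ U}) := by
    ext p
    induction p using OnePoint.rec with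
    | infty =>
      simp only [hS, mem_setOf_eq, mem_insert_iff, true_or, iff_true]
      exact fun ⟨z, _, hz⟩ => OnePoint.coe_ne_infty z hz
    | coe z =>
      simp only [hS, mem_setOf_eq, mem_insert_iff]
      constructor
      · intro h
        refine Or.inr ⟨z, ⟨z.2, fun hzF => h ⟨z, hzF, rfl⟩⟩, rfl⟩
      · rintro (h | ⟨w, hw, hwz⟩)
        · exact absurd h (OnePoint.coe_ne_infty z)
        · rintro ⟨w', hw', hw'z⟩
          exact hw.2 (hinj (hw'z.trans hwz.symm) ▸ hw')
  constructor
  · -- connected → every component unbounded or touches the boundary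
    intro hScon z hz
    by_contra hcon
    push_neg at hcon
    obtain ⟨hb, hf⟩ := hcon
    set C : Set ℂ := connectedComponentIn U z with hC
    have hCU : C ⊆ U := connectedComponentIn_subset _ _
    have hCG : C ⊆ G := hCU.trans hUG
    set u : Set (OnePoint G) := ι '' {w : G | (w : ℂ) ∈ C} with hu
    have hinfty : (∞ : OnePoint G) ∉ closure u := by
      rw [hu, aux_key G hGo C hCG]
      push_neg
      exact ⟨hb, hf⟩
    have huo : IsOpen u := by
      rw [hu, show ι '' {w : G | (w : ℂ) ∈ C} = ((↑) : G → OnePoint G) '' {w : G | (w : ℂ) ∈ C} from rfl,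
        OnePoint.isOpen_image_coe]
      exact (hUo.connectedComponentIn).preimage continuous_subtype_val
    have hsub : S ⊆ u ∪ (closure u)ᶜ := by
      intro p hp
      by_cases hpc : p ∈ closure u
      · left
        rw [hSeq] at hp
        rcases hp with rfl | ⟨w, hwU, rfl⟩
        · exact absurd hpc hinfty
        · have himg : (Subtype.val '' {w : G | (w : ℂ) ∈ C}) = C := by
            rw [show {w : G | (w : ℂ) ∈ C} = Subtype.val ⁻¹' C from rfl,
              Subtype.image_preimage_coe, inter_eq_right.mpr hCG]
          have hwcl : w ∈ closure {w : G | (w : ℂ) ∈ C} := by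
            rw [OnePoint.isOpenEmbedding_coe.isEmbedding.closure_eq_preimage_closure_image
              {w : G | (w : ℂ) ∈ C}]
            exact hpc
          have hval : (w : ℂ) ∈ closure C := by
            rw [IsEmbedding.subtypeVal.closure_eq_preimage_closure_image, himg] at hwcl
            exact hwcl
          have hwC : (w : ℂ) ∈ C := by
            rw [hC, ← aux_closure_inter hUo z]
            exact ⟨by rw [← hC]; exact hval, hwU⟩
          exact ⟨w, hwC, rfl⟩
      · exact Or.inr hpc
    have hzU : z ∈ U := hz
    have hzG : z ∈ G := hUG hzU
    have hSu : (S ∩ u).Nonempty := by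
      refine ⟨ι ⟨z, hzG⟩, ?_, ⟨⟨z, hzG⟩, mem_connectedComponentIn hzU, rfl⟩⟩
      rw [hSeq]
      exact Or.inr ⟨⟨z, hzG⟩, hzU, rfl⟩
    have hSv : (S ∩ (closure u)ᶜ).Nonempty := ⟨∞, by rw [hSeq]; exact Or.inl rfl, hinfty⟩
    obtain ⟨p, _, hpu, hpv⟩ := hScon.isPreconnected u (closure u)ᶜ huo isClosed_closure.isOpen_compl
      hsub hSu hSv
    exact hpv (subset_closure hpu)
  · -- every component unbounded or touches the boundary → connected
    intro hcond
    refine ⟨⟨∞, by rw [hSeq]; exact Or.inl rfl⟩, ?_⟩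
    rw [hSeq]
    rcases eq_empty_or_nonempty U with hUe | ⟨z0, hz0⟩
    · have : {z : G | (z : ℂ) ∈ U} = ∅ := by
        ext w; simp [hUe]
      rw [this, image_empty, insert_empty_eq]
      exact isPreconnected_singleton
    · have hdecomp : insert (∞ : OnePoint G) (ι '' {z : G | (z : ℂ) ∈ U}) =
          ⋃₀ ((fun z : ℂ => insert (∞ : OnePoint G)
            (ι '' {w : G | (w : ℂ) ∈ connectedComponentIn U z})) '' U) := by
        apply Subset.antisymm
        · rintro p (rfl | ⟨w, hwU, rfl⟩)
          · exact ⟨_, ⟨z0, hz0, rfl⟩, Or.inl rfl⟩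
          · exact ⟨_, ⟨(w : ℂ), hwU, rfl⟩,
              Or.inr ⟨w, mem_connectedComponentIn hwU, rfl⟩⟩
        · rintro p ⟨s, ⟨z, hzU, rfl⟩, hp⟩
          rcases hp with rfl | ⟨w, hwC, rfl⟩
          · exact Or.inl rfl
          · exact Or.inr ⟨w, (connectedComponentIn_subset U z) hwC, rfl⟩
      rw [hdecomp]
      apply isPreconnected_sUnion (∞ : OnePoint G)
      · rintro s ⟨z, hzU, rfl⟩
        exact Or.inl rfl
      · rintro s ⟨z, hzU, rfl⟩
        set C : Set ℂ := connectedComponentIn U z with hC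
        have hCU : C ⊆ U := connectedComponentIn_subset _ _
        have hCG : C ⊆ G := hCU.trans hUG
        have himg : (Subtype.val '' {w : G | (w : ℂ) ∈ C}) = C := by
          rw [show {w : G | (w : ℂ) ∈ C} = Subtype.val ⁻¹' C from rfl,
            Subtype.image_preimage_coe, inter_eq_right.mpr hCG]
        have hpre : IsPreconnected {w : G | (w : ℂ) ∈ C} := by
          rw [← IsInducing.subtypeVal.isPreconnected_image, himg]
          exact isPreconnected_connectedComponentIn
        have hpre2 : IsPreconnected (ι '' {w : G | (w : ℂ) ∈ C}) :=
          (OnePoint.isOpenEmbedding_coe.isEmbedding.toIsInducing.isPreconnected_image).mpr hpre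
        apply hpre2.subset_closure (subset_insert _ _)
        rw [insert_subset_iff]
        refine ⟨?_, subset_closure⟩
        rw [aux_key G hGo C hCG]
        exact hcond z hzU
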